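/- arXiv:2403.02438 — 2 statements merged into one kernel-verified Lean document; each statement's English description precedes it below -/
import Mathlib

section
/- For every continuous function g : [0,1] → ℝ and every n ≥ 1, sup_{x∈[0,1]} |B_n(g;x) − g(x)| ≤ (3/2) ω_g(1/√n), where ω_g is the modulus of continuity of g. -/
noncomputable def bern (n k : ℕ) (x : ℝ) : ℝ :=
  (n.choose k : ℝ) * x ^ k * (1 - x) ^ (n - k)

noncomputable def bernOp (n : ℕ) (f : ℝ → ℝ) (x : ℝ) : ℝ :=
  ∑ k ∈ Finset.range (n + 1), f ((k : ℝ) / (n : ℝ)) * bern n k x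

noncomputable def modCont (f : ℝ → ℝ) (δ : ℝ) : ℝ :=
  sSup {r : ℝ | ∃ x ∈ Set.Icc (0 : ℝ) 1, ∃ y ∈ Set.Icc (0 : ℝ) 1, |x - y| ≤ δ ∧ r = |f x - f y|}

open Finset
lemma bern_nonneg (n k : ℕ) {x : ℝ} (hx : x ∈ Set.Icc (0:ℝ) 1) : 0 ≤ bern n k x := by
  obtain ⟨h0, h1⟩ := hx
  have : (0:ℝ) ≤ 1 - x := by linarith
  unfold bern; positivity

lemma bern_sum (n : ℕ) (x : ℝ) : ∑ k ∈ range (n+1), bern n k x = 1 := by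
  have h := add_pow x (1-x) n
  simp only [add_sub_cancel, one_pow] at h
  calc ∑ k ∈ range (n+1), bern n k x
      = ∑ m ∈ range (n+1), x^m*(1-x)^(n-m)*(n.choose m : ℝ) := by
        apply Finset.sum_congr rfl; intro k _; unfold bern; ring
    _ = 1 := h.symm

lemma bern_variance {n : ℕ} (hn : 1 ≤ n) {x : ℝ} (hx : x ∈ Set.Icc (0:ℝ) 1) :
    ∑ k ∈ range (n+1), ((k:ℝ)/(n:ℝ) - x)^2 * bern n k x = x*(1-x)/n := by
  have hn' : (0:ℝ) < n := by exact_mod_cast hn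
  have h := bernstein.variance (n := n) (Nat.one_le_iff_ne_zero.mp hn) ⟨x, hx⟩
  rw [← Fin.sum_univ_eq_sum_range (fun k => ((k:ℝ)/(n:ℝ) - x)^2 * bern n k x), ← h]
  apply Finset.sum_congr rfl
  intro k _
  simp only [bernstein_apply, bernstein.z]
  unfold bern
  ring
lemma modCont_bdd {g : ℝ → ℝ} (hg : ContinuousOn g (Set.Icc (0 : ℝ) 1)) (δ : ℝ) :
    BddAbove {r : ℝ | ∃ x ∈ Set.Icc (0 : ℝ) 1, ∃ y ∈ Set.Icc (0 : ℝ) 1, |x - y| ≤ δ ∧ r = |g x - g y|} := by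
  obtain ⟨C, hC⟩ := (isCompact_Icc (a := (0:ℝ)) (b := 1)).exists_bound_of_continuousOn hg
  refine ⟨2 * C, ?_⟩
  rintro r ⟨x, hx, y, hy, -, rfl⟩
  have h1 := hC x hx
  have h2 := hC y hy
  calc |g x - g y| ≤ ‖g x‖ + ‖g y‖ := abs_sub _ _
    _ ≤ 2 * C := by linarith

lemma modCont_mem_le {g : ℝ → ℝ} (hg : ContinuousOn g (Set.Icc (0 : ℝ) 1)) {δ x y : ℝ}
    (hx : x ∈ Set.Icc (0:ℝ) 1) (hy : y ∈ Set.Icc (0:ℝ) 1) (hxy : |x - y| ≤ δ) :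
    |g x - g y| ≤ modCont g δ :=
  le_csSup (modCont_bdd hg δ) ⟨x, hx, y, hy, hxy, rfl⟩

lemma modCont_nonneg {g : ℝ → ℝ} (hg : ContinuousOn g (Set.Icc (0 : ℝ) 1)) {δ : ℝ}
    (hδ : 0 ≤ δ) : 0 ≤ modCont g δ := by
  have := modCont_mem_le hg (δ := δ) (x := 0) (y := 0) (by norm_num) (by norm_num) (by simpa)
  simpa using this
lemma modCont_key {g : ℝ → ℝ} (hg : ContinuousOn g (Set.Icc (0 : ℝ) 1)) {δ x y : ℝ}
    (hx : x ∈ Set.Icc (0:ℝ) 1) (hy : y ∈ Set.Icc (0:ℝ) 1) (hδ : 0 < δ) :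
    |g x - g y| ≤ (1 + |x - y|/δ) * modCont g δ := by
  set t := |x - y| with ht
  have htn : 0 ≤ t := abs_nonneg _
  set m : ℕ := ⌈t/δ⌉₊ with hm
  by_cases hm0 : m = 0
  · have h1 : t/δ ≤ 0 := by
      by_contra hc
      push_neg at hc
      have h2 : 0 < m := by rw [hm]; exact Nat.ceil_pos.mpr hc
      omega
    have ht0 : t = 0 := le_antisymm (by
      by_contra hc; push_neg at hc
      exact absurd h1 (not_le.mpr (div_pos hc hδ))) htn
    have hxy : x = y := by
      have := abs_eq_zero.mp ht0
      linarith [sub_eq_zero.mp this]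
    rw [hxy, sub_self, abs_zero]
    have := modCont_nonneg hg hδ.le
    have h2 : (0:ℝ) ≤ 1 + t/δ := by rw [ht0]; norm_num
    positivity
  · have hm1 : (1:ℝ) ≤ (m:ℝ) := by exact_mod_cast Nat.one_le_iff_ne_zero.mpr hm0
    have hmpos : (0:ℝ) < m := by linarith
    set z : ℕ → ℝ := fun i => x + (i : ℝ)/(m:ℝ) * (y - x) with hz
    have hz0 : z 0 = x := by simp [hz]
    have hzm : z m = y := by
      simp only [hz]
      field_simp
      ring
    have hmem : ∀ i ∈ Finset.range (m+1), z i ∈ Set.Icc (0:ℝ) 1 := by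
      intro i hi
      have hi' : (i:ℝ) ≤ m := by
        have := Finset.mem_range.mp hi
        exact_mod_cast Nat.lt_succ_iff.mp this
      have hc0 : 0 ≤ (i:ℝ)/(m:ℝ) := by positivity
      have hc1 : (i:ℝ)/(m:ℝ) ≤ 1 := by
        rw [div_le_one hmpos]; exact hi'
      obtain ⟨hx0, hx1⟩ := hx
      obtain ⟨hy0, hy1⟩ := hy
      constructor
      · simp only [hz]; nlinarith
      · simp only [hz]; nlinarith
    have hstep : ∀ i, |z (i+1) - z i| ≤ δ := by
      intro i
      have : z (i+1) - z i = (y - x)/(m:ℝ) := by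
        simp only [hz]
        push_cast
        field_simp
        ring
      rw [this, abs_div, abs_of_pos hmpos, abs_sub_comm, ← ht, div_le_iff₀ hmpos]
      have hceil : t/δ ≤ (m:ℝ) := by rw [hm]; exact_mod_cast Nat.le_ceil (t/δ)
      calc t = (t/δ) * δ := by field_simp
        _ ≤ δ * (m:ℝ) := by nlinarith
    have key : |g (z m) - g (z 0)| ≤ (m:ℝ) * modCont g δ := by
      calc |g (z m) - g (z 0)|
          = |∑ i ∈ range m, (g (z (i+1)) - g (z i))| := by
            congr 1
            exact (Finset.sum_range_sub (fun i => g (z i)) m).symm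
        _ ≤ ∑ i ∈ range m, |g (z (i+1)) - g (z i)| := Finset.abs_sum_le_sum_abs _ _
        _ ≤ ∑ _i ∈ range m, modCont g δ := by
            apply Finset.sum_le_sum
            intro i hi
            have h1 : i + 1 ∈ Finset.range (m+1) := by
              simp only [Finset.mem_range] at hi ⊢; omega
            have h2 : i ∈ Finset.range (m+1) := by
              simp only [Finset.mem_range] at hi ⊢; omega
            exact modCont_mem_le hg (hmem _ h1) (hmem _ h2) (hstep i)
        _ = (m:ℝ) * modCont g δ := by simp [mul_comm]
    have hmle : (m : ℝ) ≤ 1 + t/δ := by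
      have := Nat.ceil_lt_add_one (show 0 ≤ t/δ by positivity)
      rw [hm]
      push_cast
      linarith
    calc |g x - g y| = |g (z m) - g (z 0)| := by rw [hz0, hzm, abs_sub_comm]
      _ ≤ (m:ℝ) * modCont g δ := key
      _ ≤ (1 + t/δ) * modCont g δ :=
          mul_le_mul_of_nonneg_right hmle (modCont_nonneg hg hδ.le)
theorem stmt10 (g : ℝ → ℝ) (hg : ContinuousOn g (Set.Icc (0 : ℝ) 1))
    (n : ℕ) (hn : 1 ≤ n) :
    (⨆ x : Set.Icc (0 : ℝ) 1, |bernOp n g x - g x|)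
      ≤ (3 / 2) * modCont g (1 / Real.sqrt n) := by
  have hn' : (0:ℝ) < n := by exact_mod_cast hn
  set δ : ℝ := 1 / Real.sqrt n with hδdef
  have hsq : Real.sqrt n > 0 := Real.sqrt_pos.mpr hn'
  have hδ : 0 < δ := by positivity
  have hδ2 : δ^2 = 1/n := by
    rw [hδdef, div_pow, one_pow, Real.sq_sqrt hn'.le]
  set ω := modCont g δ with hω
  have hω0 : 0 ≤ ω := modCont_nonneg hg hδ.le
  have hRHS : 0 ≤ 3/2 * ω := by positivity
  apply Real.iSup_le _ hRHS
  rintro ⟨x, hx⟩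
  dsimp only
  -- pointwise bound
  set b : ℕ → ℝ := fun k => bern n k x with hb
  have hb0 : ∀ k ∈ range (n+1), 0 ≤ b k := fun k _ => bern_nonneg n k hx
  have hbsum : ∑ k ∈ range (n+1), b k = 1 := bern_sum n x
  set u : ℕ → ℝ := fun k => (k:ℝ)/(n:ℝ) - x with hu
  set S : ℝ := ∑ k ∈ range (n+1), |u k| * b k with hS
  have hS0 : 0 ≤ S := Finset.sum_nonneg fun k hk => mul_nonneg (abs_nonneg _) (hb0 k hk)
  -- Cauchy-Schwarz
  have hCS : S^2 ≤ x*(1-x)/n := by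
    have h2 := Finset.sum_mul_sq_le_sq_mul_sq (range (n+1))
      (fun k => |u k| * Real.sqrt (b k)) (fun k => Real.sqrt (b k))
    have e1 : ∀ k ∈ range (n+1),
        (|u k| * Real.sqrt (b k)) * Real.sqrt (b k) = |u k| * b k := by
      intro k hk
      rw [mul_assoc, Real.mul_self_sqrt (hb0 k hk)]
    have e2 : ∀ k ∈ range (n+1),
        (|u k| * Real.sqrt (b k))^2 = (u k)^2 * b k := by
      intro k hk
      rw [mul_pow, sq_abs, Real.sq_sqrt (hb0 k hk)]
    have e3 : ∀ k ∈ range (n+1), (Real.sqrt (b k))^2 = b k := by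
      intro k hk
      rw [Real.sq_sqrt (hb0 k hk)]
    rw [Finset.sum_congr rfl e1, Finset.sum_congr rfl e2, Finset.sum_congr rfl e3,
      hbsum, mul_one] at h2
    calc S^2 ≤ ∑ k ∈ range (n+1), (u k)^2 * b k := h2
      _ = x*(1-x)/n := bern_variance hn hx
  have hSle : S ≤ δ/2 := by
    have hx14 : x*(1-x)/n ≤ 1/(4*n) := by
      have : x*(1-x) ≤ 1/4 := by nlinarith [hx.1, hx.2, sq_nonneg (x - 1/2)]
      rw [div_le_div_iff₀ hn' (by positivity)]
      nlinarith
    have h4 : S^2 ≤ δ^2/4 := by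
      rw [hδ2]
      calc S^2 ≤ x*(1-x)/n := hCS
        _ ≤ 1/(4*n) := hx14
        _ = (1/n)/4 := by ring
    nlinarith [h4, hS0, hδ]
  -- pointwise estimate
  have estep : ∀ k ∈ range (n+1), |g ((k:ℝ)/(n:ℝ)) - g x| ≤ (1 + |u k|/δ) * ω := by
    intro k hk
    have hk' : (k:ℝ) ≤ n := by
      have := Finset.mem_range.mp hk
      exact_mod_cast Nat.lt_succ_iff.mp this
    have hkn : (k:ℝ)/(n:ℝ) ∈ Set.Icc (0:ℝ) 1 := by
      constructor
      · positivity
      · rw [div_le_one hn']; exact hk'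
    exact modCont_key hg hkn hx hδ
  have hmain : |bernOp n g x - g x| ≤ (3/2) * ω := by
    have hdiff : bernOp n g x - g x
        = ∑ k ∈ range (n+1), (g ((k:ℝ)/(n:ℝ)) - g x) * b k := by
      have h5 : ∑ k ∈ range (n+1), (g ((k:ℝ)/(n:ℝ)) - g x) * b k
          = (∑ k ∈ range (n+1), g ((k:ℝ)/(n:ℝ)) * b k)
            - (∑ k ∈ range (n+1), g x * b k) := by
        rw [← Finset.sum_sub_distrib]
        exact Finset.sum_congr rfl fun k _ => by ring
      rw [h5, ← Finset.mul_sum, hbsum, mul_one]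
      rfl
    calc |bernOp n g x - g x|
        = |∑ k ∈ range (n+1), (g ((k:ℝ)/(n:ℝ)) - g x) * b k| := by rw [hdiff]
      _ ≤ ∑ k ∈ range (n+1), |(g ((k:ℝ)/(n:ℝ)) - g x) * b k| :=
          Finset.abs_sum_le_sum_abs _ _
      _ ≤ ∑ k ∈ range (n+1), (1 + |u k|/δ) * ω * b k := by
          apply Finset.sum_le_sum
          intro k hk
          rw [abs_mul, abs_of_nonneg (hb0 k hk)]
          exact mul_le_mul_of_nonneg_right (estep k hk) (hb0 k hk)
      _ = ω * (∑ k ∈ range (n+1), b k) + (ω/δ) * S := by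
          rw [hS, Finset.mul_sum, Finset.mul_sum, ← Finset.sum_add_distrib]
          apply Finset.sum_congr rfl
          intro k hk
          field_simp
          try ring
      _ = ω + (ω/δ) * S := by rw [hbsum, mul_one]
      _ ≤ ω + (ω/δ) * (δ/2) := by
          exact add_le_add_right
            (mul_le_mul_of_nonneg_left hSle (div_nonneg hω0 hδ.le)) ω
      _ = (3/2) * ω := by field_simp; ring
  exact hmain
end

section
/- Let φ : [0,1]^m → [0,1]^m be Lipschitz with partial Lipschitz constants L_φ^{(l)} (i.e., ‖φ(x) − φ(y)‖ ≤ L_φ^{(l)} |x_l − y_l| whenever x and y differ only in the l-th coordinate), and let f : [0,1]^m → ℝ be continuous. Then sup_{x∈[0,1]^m} |B_𝐧(f∘φ; x) − f(φ(x))| ≤ (3/2) ∑_{l=1}^m Ω_f(L_φ^{(l)}/√(n_l)). -/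
noncomputable def bernOpM (m : ℕ) (n : Fin m → ℕ) (f : (Fin m → ℝ) → ℝ) (x : Fin m → ℝ) : ℝ :=
  ∑ k : (∀ l : Fin m, Fin (n l + 1)),
    f (fun l => (k l : ℝ) / (n l : ℝ)) * ∏ l : Fin m, bern (n l) (k l) (x l)

noncomputable def eudist {m : ℕ} (x y : Fin m → ℝ) : ℝ :=
  Real.sqrt (∑ l : Fin m, (x l - y l) ^ 2)

noncomputable def modContM (m : ℕ) (f : (Fin m → ℝ) → ℝ) (δ : ℝ) : ℝ :=
  sSup {r : ℝ | ∃ x ∈ Set.Icc (0 : Fin m → ℝ) 1, ∃ y ∈ Set.Icc (0 : Fin m → ℝ) 1,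
    eudist x y ≤ δ ∧ r = |f x - f y|}

namespace S16

lemma bern_nonneg {n k : ℕ} {x : ℝ} (h0 : 0 ≤ x) (h1 : x ≤ 1) : 0 ≤ bern n k x := by
  have : 0 ≤ 1 - x := by linarith
  unfold bern; positivity

lemma bern_eq {n k : ℕ} {x : ℝ} (hx : x ∈ Set.Icc (0:ℝ) 1) :
    bern n k x = bernstein n k ⟨x, hx⟩ := by
  rw [bernstein_apply]; rfl

lemma bern_sum_one {n : ℕ} {x : ℝ} (hx : x ∈ Set.Icc (0:ℝ) 1) :
    ∑ a : Fin (n+1), bern n a x = 1 := by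
  have h := bernstein.probability n ⟨x, hx⟩
  rw [← h]
  exact Finset.sum_congr rfl fun a _ => bern_eq hx

lemma bern_variance {n : ℕ} (hn : 1 ≤ n) {x : ℝ} (hx : x ∈ Set.Icc (0:ℝ) 1) :
    ∑ a : Fin (n+1), ((a:ℝ)/n - x) ^ 2 * bern n a x = x * (1 - x) / n := by
  have hn0 : (0:ℝ) < n := by exact_mod_cast hn
  have h := bernstein.variance (by omega : n ≠ 0) ⟨x, hx⟩
  rw [← h]
  refine Finset.sum_congr rfl fun a _ => ?_
  rw [bern_eq hx]
  congr 1
  have : ((⟨x, hx⟩ : unitInterval) : ℝ) - (bernstein.z a : ℝ) = -( (a:ℝ)/n - x) := by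
    simp [bernstein.z]
  rw [this]
  ring


variable {m : ℕ} {f : (Fin m → ℝ) → ℝ}

def mcSet (m : ℕ) (f : (Fin m → ℝ) → ℝ) (δ : ℝ) : Set ℝ :=
  {r : ℝ | ∃ x ∈ Set.Icc (0 : Fin m → ℝ) 1, ∃ y ∈ Set.Icc (0 : Fin m → ℝ) 1,
    eudist x y ≤ δ ∧ r = |f x - f y|}

lemma modContM_eq (δ : ℝ) : modContM m f δ = sSup (mcSet m f δ) := rfl

lemma zero_mem_Icc : (0 : Fin m → ℝ) ∈ Set.Icc (0 : Fin m → ℝ) 1 :=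
  ⟨le_refl _, fun _ => zero_le_one⟩

lemma eudist_self (x : Fin m → ℝ) : eudist x x = 0 := by simp [eudist]

lemma eudist_nonneg (x y : Fin m → ℝ) : 0 ≤ eudist x y := Real.sqrt_nonneg _

lemma zero_mem_mcSet {δ : ℝ} (hδ : 0 ≤ δ) : (0:ℝ) ∈ mcSet m f δ :=
  ⟨0, zero_mem_Icc, 0, zero_mem_Icc, by rw [eudist_self]; exact hδ, by simp⟩

lemma mcSet_bddAbove (hf : ContinuousOn f (Set.Icc (0 : Fin m → ℝ) 1)) (δ : ℝ) :
    BddAbove (mcSet m f δ) := by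
  obtain ⟨M, hM⟩ := isCompact_Icc.exists_bound_of_continuousOn hf
  refine ⟨M + M, ?_⟩
  rintro r ⟨x, hx, y, hy, -, rfl⟩
  have h1 := hM x hx
  have h2 := hM y hy
  rw [Real.norm_eq_abs] at h1 h2
  calc |f x - f y| ≤ |f x| + |f y| := abs_sub _ _
    _ ≤ M + M := add_le_add h1 h2

lemma mod_nonneg (hf : ContinuousOn f (Set.Icc (0 : Fin m → ℝ) 1)) {δ : ℝ} (hδ : 0 ≤ δ) :
    0 ≤ modContM m f δ :=
  le_csSup (mcSet_bddAbove hf δ) (zero_mem_mcSet hδ)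

lemma abs_le_mod (hf : ContinuousOn f (Set.Icc (0 : Fin m → ℝ) 1)) {δ : ℝ}
    {x y : Fin m → ℝ} (hx : x ∈ Set.Icc (0 : Fin m → ℝ) 1)
    (hy : y ∈ Set.Icc (0 : Fin m → ℝ) 1) (hd : eudist x y ≤ δ) :
    |f x - f y| ≤ modContM m f δ :=
  le_csSup (mcSet_bddAbove hf δ) ⟨x, hx, y, hy, hd, rfl⟩

lemma mod_mono (hf : ContinuousOn f (Set.Icc (0 : Fin m → ℝ) 1)) {δ δ' : ℝ}
    (h0 : 0 ≤ δ) (h : δ ≤ δ') : modContM m f δ ≤ modContM m f δ' := by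
  refine csSup_le_csSup (mcSet_bddAbove hf δ') ⟨0, zero_mem_mcSet h0⟩ ?_
  rintro r ⟨x, hx, y, hy, hd, rfl⟩
  exact ⟨x, hx, y, hy, hd.trans h, rfl⟩

lemma chain (hf : ContinuousOn f (Set.Icc (0 : Fin m → ℝ) 1)) {δ : ℝ} (hδ : 0 ≤ δ)
    {N : ℕ} (hN : 1 ≤ N) {x y : Fin m → ℝ} (hx : x ∈ Set.Icc (0 : Fin m → ℝ) 1)
    (hy : y ∈ Set.Icc (0 : Fin m → ℝ) 1) (hd : eudist x y ≤ N * δ) :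
    |f x - f y| ≤ N * modContM m f δ := by
  have hN0 : (0:ℝ) < N := by exact_mod_cast hN
  set p : ℕ → (Fin m → ℝ) := fun i l => x l + ((i : ℝ) / N) * (y l - x l) with hp
  have hp0 : p 0 = x := by funext l; simp [hp]
  have hpN : p N = y := by
    funext l; simp only [hp]
    rw [div_self (ne_of_gt hN0)]; ring
  have hpmem : ∀ i, i ≤ N → p i ∈ Set.Icc (0 : Fin m → ℝ) 1 := by
    intro i hi
    have ht0 : (0:ℝ) ≤ (i:ℝ)/N := by positivity
    have ht1 : (i:ℝ)/N ≤ 1 := by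
      rw [div_le_one hN0]; exact_mod_cast hi
    constructor <;> intro l
    · have h1 := hx.1 l; have h2 := hy.1 l
      simp only [Pi.zero_apply] at h1 h2 ⊢
      have : p i l = (1 - (i:ℝ)/N) * x l + ((i:ℝ)/N) * y l := by simp [hp]; ring
      rw [this]; nlinarith
    · have h1 := hx.2 l; have h2 := hy.2 l
      simp only [Pi.one_apply] at h1 h2 ⊢
      have : p i l = (1 - (i:ℝ)/N) * x l + ((i:ℝ)/N) * y l := by simp [hp]; ring
      rw [this]; nlinarith
  have hstep : ∀ i, i < N → eudist (p (i+1)) (p i) ≤ δ := by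
    intro i hi
    have hco : ∀ l, (p (i+1) l - p i l) ^ 2 = (1/(N:ℝ))^2 * (x l - y l)^2 := by
      intro l; simp only [hp]; push_cast
      field_simp
      ring
    have : eudist (p (i+1)) (p i) = (1/(N:ℝ)) * eudist x y := by
      unfold eudist
      rw [Finset.sum_congr rfl (fun l _ => hco l), ← Finset.mul_sum,
        Real.sqrt_mul (by positivity), Real.sqrt_sq (by positivity)]
    rw [this]
    calc (1/(N:ℝ)) * eudist x y ≤ (1/(N:ℝ)) * ((N:ℝ) * δ) := by
          apply mul_le_mul_of_nonneg_left hd (by positivity)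
      _ = δ := by field_simp
  have htel : f y - f x = ∑ i ∈ Finset.range N, (f (p (i+1)) - f (p i)) := by
    rw [Finset.sum_range_sub (fun i => f (p i)), hp0, hpN]
  rw [abs_sub_comm, htel]
  calc |∑ i ∈ Finset.range N, (f (p (i+1)) - f (p i))|
      ≤ ∑ i ∈ Finset.range N, |f (p (i+1)) - f (p i)| := Finset.abs_sum_le_sum_abs _ _
    _ ≤ ∑ _i ∈ Finset.range N, modContM m f δ := by
        refine Finset.sum_le_sum fun i hi => ?_
        have hi' := Finset.mem_range.mp hi
        exact abs_le_mod hf (hpmem (i+1) hi') (hpmem i (le_of_lt hi')) (hstep i hi')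
    _ = N * modContM m f δ := by
        rw [Finset.sum_const, Finset.card_range, nsmul_eq_mul]

lemma mod_scale (hf : ContinuousOn f (Set.Icc (0 : Fin m → ℝ) 1)) {lam δ : ℝ}
    (hlam : 0 ≤ lam) (hδ : 0 ≤ δ) :
    modContM m f (lam * δ) ≤ (1 + lam) * modContM m f δ := by
  rw [modContM_eq]
  refine csSup_le ⟨0, zero_mem_mcSet (mul_nonneg hlam hδ)⟩ ?_
  rintro r ⟨x, hx, y, hy, hd, rfl⟩
  set N : ℕ := max ⌈lam⌉₊ 1 with hNdef
  have hN1 : 1 ≤ N := le_max_right _ _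
  have hlamN : lam ≤ (N:ℝ) := by
    calc lam ≤ (⌈lam⌉₊ : ℝ) := Nat.le_ceil lam
      _ ≤ (N:ℝ) := by exact_mod_cast le_max_left _ _
  have hNle : (N:ℝ) ≤ 1 + lam := by
    have h1 : (⌈lam⌉₊ : ℝ) < lam + 1 := Nat.ceil_lt_add_one hlam
    have : (N:ℝ) = max (⌈lam⌉₊ : ℝ) 1 := by rw [hNdef]; push_cast [Nat.cast_max]; rfl
    rw [this]
    apply max_le (by linarith) (by linarith)
  have hd' : eudist x y ≤ (N:ℝ) * δ :=
    hd.trans (mul_le_mul_of_nonneg_right hlamN hδ)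
  calc |f x - f y| ≤ (N:ℝ) * modContM m f δ := chain hf hδ hN1 hx hy hd'
    _ ≤ (1 + lam) * modContM m f δ :=
        mul_le_mul_of_nonneg_right hNle (mod_nonneg hf hδ)


lemma uni (hf : ContinuousOn f (Set.Icc (0 : Fin m → ℝ) 1)) {n : ℕ} (hn : 1 ≤ n)
    {L : ℝ} (hL : 0 ≤ L) {x : ℝ} (hx : x ∈ Set.Icc (0:ℝ) 1) :
    ∑ a : Fin (n+1), modContM m f (L * |(a:ℝ)/n - x|) * bern n a x
      ≤ 3/2 * modContM m f (L / Real.sqrt n) := by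
  have hn0 : (0:ℝ) < n := by exact_mod_cast hn
  have hs : (0:ℝ) < Real.sqrt n := Real.sqrt_pos.mpr hn0
  set δ : ℝ := L / Real.sqrt n with hδdef
  have hδ : 0 ≤ δ := div_nonneg hL hs.le
  have hΩ : 0 ≤ modContM m f δ := mod_nonneg hf hδ
  have hb : ∀ a : Fin (n+1), 0 ≤ bern n a x := fun a => bern_nonneg hx.1 hx.2
  set d : Fin (n+1) → ℝ := fun a => (a:ℝ)/n - x with hd
  -- step 1 : pointwise bound
  have step1 : ∀ a : Fin (n+1),
      modContM m f (L * |d a|) ≤ (1 + Real.sqrt n * |d a|) * modContM m f δ := by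
    intro a
    have harg : L * |d a| = (Real.sqrt n * |d a|) * δ := by
      rw [hδdef]; field_simp
    rw [harg]
    exact mod_scale hf (by positivity) hδ
  -- Cauchy-Schwarz
  set T : ℝ := ∑ a : Fin (n+1), |d a| * bern n a x with hT
  have hT0 : 0 ≤ T := Finset.sum_nonneg fun a _ => mul_nonneg (abs_nonneg _) (hb a)
  have hCS : T ^ 2 ≤ x * (1 - x) / n := by
    have h1 : T = ∑ a : Fin (n+1),
        (|d a| * Real.sqrt (bern n a x)) * Real.sqrt (bern n a x) := by
      refine Finset.sum_congr rfl fun a _ => ?_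
      rw [mul_assoc, Real.mul_self_sqrt (hb a)]
    have h2 := Finset.sum_mul_sq_le_sq_mul_sq Finset.univ
      (fun a : Fin (n+1) => |d a| * Real.sqrt (bern n a x))
      (fun a : Fin (n+1) => Real.sqrt (bern n a x))
    rw [← h1] at h2
    have h3 : ∑ a : Fin (n+1), (|d a| * Real.sqrt (bern n a x)) ^ 2
        = ∑ a : Fin (n+1), d a ^ 2 * bern n a x := by
      refine Finset.sum_congr rfl fun a _ => ?_
      rw [mul_pow, Real.sq_sqrt (hb a), sq_abs]
    have h4 : ∑ a : Fin (n+1), (Real.sqrt (bern n a x)) ^ 2 = 1 := by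
      rw [Finset.sum_congr rfl fun a _ => Real.sq_sqrt (hb a)]
      exact bern_sum_one hx
    rw [h3, h4, mul_one, bern_variance hn hx] at h2
    exact h2
  have hvar : x * (1 - x) / n ≤ 1 / (4 * n) := by
    rw [div_le_div_iff₀ hn0 (by positivity)]
    nlinarith [sq_nonneg (2*x-1), hn0]
  have hTle : T ≤ 1 / (2 * Real.sqrt n) := by
    have hq : (1 / (2 * Real.sqrt n)) ^ 2 = 1 / (4 * n) := by
      rw [div_pow, mul_pow, Real.sq_sqrt hn0.le]; norm_num
    have h5 : T ^ 2 ≤ (1 / (2 * Real.sqrt n)) ^ 2 := by rw [hq]; exact hCS.trans hvar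
    have h6 : (0:ℝ) ≤ 1 / (2 * Real.sqrt n) := by positivity
    nlinarith
  -- combine
  calc ∑ a : Fin (n+1), modContM m f (L * |d a|) * bern n a x
      ≤ ∑ a : Fin (n+1), ((1 + Real.sqrt n * |d a|) * modContM m f δ) * bern n a x := by
        refine Finset.sum_le_sum fun a _ => ?_
        exact mul_le_mul_of_nonneg_right (step1 a) (hb a)
    _ = (∑ a : Fin (n+1), (1 + Real.sqrt n * |d a|) * bern n a x) * modContM m f δ := by
        rw [Finset.sum_mul]
        exact Finset.sum_congr rfl fun a _ => by ring
    _ = (1 + Real.sqrt n * T) * modContM m f δ := by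
        congr 1
        rw [hT, Finset.mul_sum]
        simp only [add_mul, one_mul]
        rw [Finset.sum_add_distrib, bern_sum_one hx]
        congr 1
        exact Finset.sum_congr rfl fun a _ => by ring
    _ ≤ (3/2) * modContM m f δ := by
        apply mul_le_mul_of_nonneg_right _ hΩ
        have h8 : Real.sqrt n * T ≤ Real.sqrt n * (1 / (2 * Real.sqrt n)) :=
          mul_le_mul_of_nonneg_left hTle hs.le
        have h7 : Real.sqrt n * (1 / (2 * Real.sqrt n)) = 1/2 := by
          field_simp
        nlinarith


lemma tele (hf : ContinuousOn f (Set.Icc (0 : Fin m → ℝ) 1))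
    {φ : (Fin m → ℝ) → (Fin m → ℝ)}
    (hφmap : Set.MapsTo φ (Set.Icc (0 : Fin m → ℝ) 1) (Set.Icc (0 : Fin m → ℝ) 1))
    {Lp : Fin m → ℝ}
    (hLp : ∀ l : Fin m, ∀ x ∈ Set.Icc (0 : Fin m → ℝ) 1, ∀ y ∈ Set.Icc (0 : Fin m → ℝ) 1,
      (∀ j : Fin m, j ≠ l → x j = y j) → eudist (φ x) (φ y) ≤ Lp l * |x l - y l|)
    {u v : Fin m → ℝ} (hu : u ∈ Set.Icc (0 : Fin m → ℝ) 1)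
    (hv : v ∈ Set.Icc (0 : Fin m → ℝ) 1) :
    |f (φ u) - f (φ v)| ≤ ∑ l : Fin m, modContM m f (Lp l * |u l - v l|) := by
  set w : ℕ → (Fin m → ℝ) := fun j l => if (l:ℕ) < j then v l else u l with hw
  have hw0 : w 0 = u := by funext l; simp [hw]
  have hwm : w m = v := by funext l; simp [hw, l.isLt]
  have hwmem : ∀ j, w j ∈ Set.Icc (0 : Fin m → ℝ) 1 := by
    intro j
    constructor <;> intro l <;> simp only [hw, Pi.zero_apply, Pi.one_apply]
    · split_ifs
      · exact hv.1 l
      · exact hu.1 l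
    · split_ifs
      · exact hv.2 l
      · exact hu.2 l
  set G : ℕ → ℝ := fun j =>
    if h : j < m then modContM m f (Lp ⟨j, h⟩ * |u ⟨j, h⟩ - v ⟨j, h⟩|) else 0 with hG
  have key : ∀ j ∈ Finset.range m, |f (φ (w (j+1))) - f (φ (w j))| ≤ G j := by
    intro j hj
    have hjm : j < m := Finset.mem_range.mp hj
    set l : Fin m := ⟨j, hjm⟩ with hl
    have hdiff : ∀ i : Fin m, i ≠ l → w (j+1) i = w j i := by
      intro i hi
      have hij : (i:ℕ) ≠ j := fun h => hi (Fin.ext h)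
      show (if (i:ℕ) < j+1 then v i else u i) = (if (i:ℕ) < j then v i else u i)
      split_ifs with h1 h2 <;> first | rfl | omega
    have hd := hLp l (w (j+1)) (hwmem (j+1)) (w j) (hwmem j) hdiff
    have hv1 : w (j+1) l = v l := by simp [hw, hl]
    have hv2 : w j l = u l := by simp [hw, hl]
    rw [hv1, hv2, abs_sub_comm (v l)] at hd
    rw [hG]
    simp only [hjm, dif_pos]
    exact abs_le_mod hf (hφmap (hwmem (j+1))) (hφmap (hwmem j)) hd
  have htel : f (φ v) - f (φ u) = ∑ j ∈ Finset.range m, (f (φ (w (j+1))) - f (φ (w j))) := by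
    rw [Finset.sum_range_sub (fun j => f (φ (w j))), hw0, hwm]
  have hfin : ∑ l : Fin m, modContM m f (Lp l * |u l - v l|) = ∑ j ∈ Finset.range m, G j := by
    rw [← Fin.sum_univ_eq_sum_range G m]
    refine Finset.sum_congr rfl fun l _ => ?_
    rw [hG]
    simp only [l.isLt, dif_pos]
  rw [abs_sub_comm, htel, hfin]
  calc |∑ j ∈ Finset.range m, (f (φ (w (j+1))) - f (φ (w j)))|
      ≤ ∑ j ∈ Finset.range m, |f (φ (w (j+1))) - f (φ (w j))| := Finset.abs_sum_le_sum_abs _ _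
    _ ≤ ∑ j ∈ Finset.range m, G j := Finset.sum_le_sum key

lemma marg {n : Fin m → ℕ} {x : Fin m → ℝ} (hx : ∀ i, x i ∈ Set.Icc (0:ℝ) 1)
    (l : Fin m) (F : Fin (n l + 1) → ℝ) :
    ∑ k : (∀ i : Fin m, Fin (n i + 1)), F (k l) * ∏ i, bern (n i) (k i) (x i)
      = ∑ a : Fin (n l + 1), F a * bern (n l) a (x l) := by
  classical
  set H : ∀ i : Fin m, Fin (n i + 1) → ℝ :=
    Function.update (fun i (a : Fin (n i + 1)) => bern (n i) a (x i)) l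
      (fun a => F a * bern (n l) a (x l)) with hH
  have hHl : H l = fun a => F a * bern (n l) a (x l) := Function.update_self l _ _
  have hHne : ∀ i, i ≠ l → H i = fun (a : Fin (n i + 1)) => bern (n i) a (x i) := fun i hi =>
    Function.update_of_ne hi _ _
  have hpt : ∀ k : (∀ i : Fin m, Fin (n i + 1)),
      F (k l) * ∏ i, bern (n i) (k i) (x i) = ∏ i, H i (k i) := by
    intro k
    rw [← Finset.mul_prod_erase Finset.univ (fun i => H i (k i)) (Finset.mem_univ l),
      ← Finset.mul_prod_erase Finset.univ (fun i => bern (n i) (k i) (x i)) (Finset.mem_univ l)]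
    rw [hHl, ← mul_assoc]
    congr 1
    refine Finset.prod_congr rfl fun i hi => ?_
    rw [hHne i (Finset.ne_of_mem_erase hi)]
  rw [Finset.sum_congr rfl fun k _ => hpt k, ← Fintype.prod_sum]
  rw [Fintype.prod_eq_single l (fun i hi => by rw [hHne i hi]; exact bern_sum_one (hx i))]
  rw [hHl]

end S16

theorem stmt16 (m : ℕ) (n : Fin m → ℕ) (hn : ∀ l, 1 ≤ n l)
    (φ : (Fin m → ℝ) → (Fin m → ℝ))
    (hφmap : Set.MapsTo φ (Set.Icc (0 : Fin m → ℝ) 1) (Set.Icc (0 : Fin m → ℝ) 1))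
    (Lp : Fin m → ℝ)
    (hLp : ∀ l : Fin m, ∀ x ∈ Set.Icc (0 : Fin m → ℝ) 1, ∀ y ∈ Set.Icc (0 : Fin m → ℝ) 1,
      (∀ j : Fin m, j ≠ l → x j = y j) → eudist (φ x) (φ y) ≤ Lp l * |x l - y l|)
    (f : (Fin m → ℝ) → ℝ)
    (hf : ContinuousOn f (Set.Icc (0 : Fin m → ℝ) 1)) :
    (⨆ x : Set.Icc (0 : Fin m → ℝ) 1, |bernOpM m n (f ∘ φ) x - f (φ x)|)
      ≤ (3 / 2) * ∑ l : Fin m, modContM m f (Lp l / Real.sqrt (n l : ℝ)) := by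
  classical
  have h0mem := S16.zero_mem_Icc (m := m)
  have hLp0 : ∀ l, 0 ≤ Lp l := by
    intro l
    set y : Fin m → ℝ := fun j => if j = l then 1 else 0 with hy
    have hymem : y ∈ Set.Icc (0 : Fin m → ℝ) 1 := by
      constructor <;> intro j <;> simp only [hy, Pi.zero_apply, Pi.one_apply] <;>
        split_ifs <;> norm_num
    have hd := hLp l 0 h0mem y hymem (fun j hj => by simp [hy, hj])
    have h2 : |(0 : Fin m → ℝ) l - y l| = 1 := by simp [hy]
    rw [h2, mul_one] at hd
    have := S16.eudist_nonneg (φ 0) (φ y)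
    linarith
  have hRHS0 : 0 ≤ (3/2 : ℝ) * ∑ l : Fin m, modContM m f (Lp l / Real.sqrt (n l : ℝ)) := by
    apply mul_nonneg (by norm_num)
    exact Finset.sum_nonneg fun l _ =>
      S16.mod_nonneg hf (div_nonneg (hLp0 l) (Real.sqrt_nonneg _))
  apply Real.iSup_le _ hRHS0
  rintro ⟨x, hx⟩
  have hxl : ∀ l, x l ∈ Set.Icc (0:ℝ) 1 := fun l => ⟨hx.1 l, hx.2 l⟩
  have hsum1 : ∑ k : (∀ i : Fin m, Fin (n i + 1)), ∏ i, bern (n i) (k i) (x i) = 1 := by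
    calc ∑ k : (∀ i : Fin m, Fin (n i + 1)), ∏ i, bern (n i) (k i) (x i)
        = ∏ i : Fin m, ∑ a : Fin (n i + 1), bern (n i) a (x i) :=
          (Fintype.prod_sum fun (i : Fin m) (a : Fin (n i + 1)) => bern (n i) a (x i)).symm
      _ = 1 := Finset.prod_eq_one fun i _ => S16.bern_sum_one (hxl i)
  have hnodemem : ∀ k : (∀ i : Fin m, Fin (n i + 1)),
      (fun l => (k l : ℝ) / (n l : ℝ)) ∈ Set.Icc (0 : Fin m → ℝ) 1 := by
    intro k
    constructor <;> intro l <;> simp only [Pi.zero_apply, Pi.one_apply]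
    · positivity
    · have hl : ((k l : ℕ) : ℝ) ≤ (n l : ℝ) := by exact_mod_cast Fin.is_le (k l)
      have hpos : (0:ℝ) < n l := by exact_mod_cast hn l
      rw [div_le_one hpos]; exact hl
  have hbnn : ∀ k : (∀ i : Fin m, Fin (n i + 1)), 0 ≤ ∏ i, bern (n i) (k i) (x i) :=
    fun k => Finset.prod_nonneg fun i _ => S16.bern_nonneg (hxl i).1 (hxl i).2
  have hsplit : bernOpM m n (f ∘ φ) x - f (φ x)
      = ∑ k : (∀ i : Fin m, Fin (n i + 1)),
          (f (φ (fun l => (k l : ℝ) / (n l : ℝ))) - f (φ x)) * ∏ i, bern (n i) (k i) (x i) := by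
    rw [bernOpM]
    simp only [sub_mul, Function.comp]
    rw [Finset.sum_sub_distrib, ← Finset.mul_sum, hsum1, mul_one]
  calc |bernOpM m n (f ∘ φ) x - f (φ x)|
      = |∑ k : (∀ i : Fin m, Fin (n i + 1)),
          (f (φ (fun l => (k l : ℝ) / (n l : ℝ))) - f (φ x)) * ∏ i, bern (n i) (k i) (x i)| := by
        rw [hsplit]
    _ ≤ ∑ k : (∀ i : Fin m, Fin (n i + 1)),
          |(f (φ (fun l => (k l : ℝ) / (n l : ℝ))) - f (φ x)) * ∏ i, bern (n i) (k i) (x i)| :=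
        Finset.abs_sum_le_sum_abs _ _
    _ = ∑ k : (∀ i : Fin m, Fin (n i + 1)),
          |f (φ (fun l => (k l : ℝ) / (n l : ℝ))) - f (φ x)| * ∏ i, bern (n i) (k i) (x i) := by
        refine Finset.sum_congr rfl fun k _ => ?_
        rw [abs_mul, abs_of_nonneg (hbnn k)]
    _ ≤ ∑ k : (∀ i : Fin m, Fin (n i + 1)),
          (∑ l : Fin m, modContM m f (Lp l * |(k l : ℝ) / (n l : ℝ) - x l|))
            * ∏ i, bern (n i) (k i) (x i) := by
        refine Finset.sum_le_sum fun k _ => ?_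
        refine mul_le_mul_of_nonneg_right ?_ (hbnn k)
        exact S16.tele hf hφmap hLp (hnodemem k) hx
    _ = ∑ l : Fin m, ∑ k : (∀ i : Fin m, Fin (n i + 1)),
          modContM m f (Lp l * |(k l : ℝ) / (n l : ℝ) - x l|) * ∏ i, bern (n i) (k i) (x i) := by
        simp only [Finset.sum_mul]
        rw [Finset.sum_comm]
    _ = ∑ l : Fin m, ∑ a : Fin (n l + 1),
          modContM m f (Lp l * |(a : ℝ) / (n l : ℝ) - x l|) * bern (n l) a (x l) :=
        Finset.sum_congr rfl fun l _ =>
          S16.marg hxl l (fun a => modContM m f (Lp l * |(a : ℝ) / (n l : ℝ) - x l|))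
    _ ≤ ∑ l : Fin m, 3/2 * modContM m f (Lp l / Real.sqrt (n l : ℝ)) :=
        Finset.sum_le_sum fun l _ => S16.uni hf (hn l) (hLp0 l) (hxl l)
    _ = 3/2 * ∑ l : Fin m, modContM m f (Lp l / Real.sqrt (n l : ℝ)) :=
        (Finset.mul_sum _ _ _).symm
end
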